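/- Let a>0. (i) If α≥0 then there is no κ>0 with (2κ+α)² = α²·exp(−4κa). (ii) If α<0 then there is exactly one κ>0 satisfying 2κ+α = −α·exp(−2κa). (iii) If α<0 then a positive solution κ of 2κ+α = α·exp(−2κa) exists if and only if aα < −1, and in that case it is unique. Consequently, for α<0 the equation (2κ+α)² = α²·exp(−4κa) has exactly one positive solution when −1 ≤ aα < 0 and exactly two positive solutions when aα < −1. -/

import Mathlib

open Filter

private lemma stmt14_Fderiv (a α x : ℝ) :
    HasDerivAt (fun κ => 2 * κ + α + α * Real.exp (-2 * κ * a))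
      (2 + α * (Real.exp (-2 * x * a) * (-2 * a))) x := by
  have h1 : HasDerivAt (fun κ : ℝ => -2 * κ * a) (-2 * a) x := by
    simpa using ((hasDerivAt_id x).const_mul (-2 : ℝ)).mul_const a
  have h3 : HasDerivAt (fun κ : ℝ => 2 * κ + α) 2 x := by
    simpa using ((hasDerivAt_id x).const_mul (2 : ℝ)).add_const α
  exact h3.add (h1.exp.const_mul α)

private lemma stmt14_Hderiv (a α x : ℝ) :
    HasDerivAt (fun κ => (2 * κ + α) * Real.exp (2 * κ * a) - α)
      (2 * Real.exp (2 * x * a) + (2 * x + α) * (Real.exp (2 * x * a) * (2 * a))) x := by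
  have h1 : HasDerivAt (fun κ : ℝ => 2 * κ * a) (2 * a) x := by
    simpa using ((hasDerivAt_id x).const_mul (2 : ℝ)).mul_const a
  have h3 : HasDerivAt (fun κ : ℝ => 2 * κ + α) 2 x := by
    simpa using ((hasDerivAt_id x).const_mul (2 : ℝ)).add_const α
  simpa using (h3.mul h1.exp).sub_const α

private lemma stmt14_key (a α κ : ℝ) :
    (2 * κ + α = α * Real.exp (-2 * κ * a)) ↔
      (2 * κ + α) * Real.exp (2 * κ * a) - α = 0 := by
  have e1 : Real.exp (-2 * κ * a) * Real.exp (2 * κ * a) = 1 := by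
    rw [← Real.exp_add, show -2 * κ * a + 2 * κ * a = 0 by ring, Real.exp_zero]
  constructor
  · intro h; rw [h]; linear_combination α * e1
  · intro h; linear_combination Real.exp (-2 * κ * a) * h - (2 * κ + α) * e1

private lemma stmt14_aux_ii (a : ℝ) (ha : 0 < a) (α : ℝ) (hα : α < 0) :
    ∃! κ : ℝ, 0 < κ ∧ 2 * κ + α = -α * Real.exp (-2 * κ * a) := by
  set F : ℝ → ℝ := fun κ => 2 * κ + α + α * Real.exp (-2 * κ * a) with hF
  have hFmono : StrictMono F := by
    apply strictMono_of_deriv_pos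
    intro x
    rw [(stmt14_Fderiv a α x).deriv]
    nlinarith [mul_pos (mul_pos ha (show 0 < -α by linarith)) (Real.exp_pos (-2 * x * a))]
  have hcont : Continuous F := by fun_prop
  have h0 : F 0 = 2 * α := by simp [hF]; ring
  have hpos : 0 < F (-α) := by
    have h1 : Real.exp (-2 * -α * a) < 1 := by
      rw [show (1:ℝ) = Real.exp 0 by simp]
      exact Real.exp_lt_exp.mpr (by nlinarith)
    have : F (-α) = -α + α * Real.exp (-2 * -α * a) := by simp [hF]; ring
    nlinarith
  obtain ⟨κ, hκIcc, hκ⟩ := intermediate_value_Icc (by linarith : (0:ℝ) ≤ -α)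
    hcont.continuousOn (⟨by linarith, le_of_lt hpos⟩ : (0:ℝ) ∈ Set.Icc (F 0) (F (-α)))
  have hκpos : 0 < κ := by
    rcases lt_or_eq_of_le hκIcc.1 with h | h
    · exact h
    · exfalso; rw [← h] at hκ; rw [h0] at hκ; linarith
  refine ⟨κ, ⟨hκpos, by have := hκ; simp only [hF] at this; linarith⟩, ?_⟩
  rintro y ⟨hy, hyeq⟩
  have hFy : F y = 0 := by simp only [hF]; linarith
  exact hFmono.injective (by rw [hFy, hκ])

private lemma stmt14_noroot (a : ℝ) (ha : 0 < a) (α : ℝ) (hα : α < 0) (h1 : -1 ≤ a * α) :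
    ¬∃ κ : ℝ, 0 < κ ∧ 2 * κ + α = α * Real.exp (-2 * κ * a) := by
  rintro ⟨κ, hκ, heq⟩
  set H : ℝ → ℝ := fun κ => (2 * κ + α) * Real.exp (2 * κ * a) - α with hH
  have hcont : Continuous H := by fun_prop
  have hmono : StrictMonoOn H (Set.Ici 0) := by
    apply strictMonoOn_of_deriv_pos (convex_Ici 0) hcont.continuousOn
    intro x hx
    rw [interior_Ici, Set.mem_Ioi] at hx
    rw [(stmt14_Hderiv a α x).deriv]
    nlinarith [Real.exp_pos (2 * x * a), mul_pos ha hx]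
  have hH0 : H 0 = 0 := by simp [hH]
  have : H 0 < H κ := hmono Set.self_mem_Ici (le_of_lt hκ) hκ
  rw [hH0, ← (stmt14_key a α κ).mp heq] at this
  exact lt_irrefl _ this

private lemma stmt14_root (a : ℝ) (ha : 0 < a) (α : ℝ) (hα : α < 0) (h1 : a * α < -1) :
    ∃! κ : ℝ, 0 < κ ∧ 2 * κ + α = α * Real.exp (-2 * κ * a) := by
  set H : ℝ → ℝ := fun κ => (2 * κ + α) * Real.exp (2 * κ * a) - α with hH
  have hcont : Continuous H := by fun_prop
  set c : ℝ := -(1 + a * α) / (2 * a) with hcdef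
  have hc2 : 2 * a * c = -(1 + a * α) := by rw [hcdef]; field_simp
  have hc : 0 < c := by
    rw [hcdef]
    apply div_pos (by linarith) (by linarith)
  have hanti : StrictAntiOn H (Set.Icc 0 c) := by
    apply strictAntiOn_of_deriv_neg (convex_Icc 0 c) hcont.continuousOn
    intro x hx
    rw [interior_Icc, Set.mem_Ioo] at hx
    rw [(stmt14_Hderiv a α x).deriv]
    have h4 : 2 * a * x < 2 * a * c := by nlinarith [hx.2]
    nlinarith [Real.exp_pos (2 * x * a)]
  have hmono : StrictMonoOn H (Set.Ici c) := by
    apply strictMonoOn_of_deriv_pos (convex_Ici c) hcont.continuousOn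
    intro x hx
    rw [interior_Ici, Set.mem_Ioi] at hx
    rw [(stmt14_Hderiv a α x).deriv]
    have h4 : 2 * a * c < 2 * a * x := by nlinarith
    nlinarith [Real.exp_pos (2 * x * a)]
  have hH0 : H 0 = 0 := by simp [hH]
  have hHc : H c < 0 := by
    have := hanti (Set.left_mem_Icc.mpr (le_of_lt hc)) ⟨le_of_lt hc, le_refl c⟩ hc
    rw [hH0] at this; exact this
  set b : ℝ := max c (-α) with hbdef
  have hbc : c ≤ b := le_max_left _ _
  have hbα : -α ≤ b := le_max_right _ _
  have hbpos : 0 < b := lt_of_lt_of_le hc hbc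
  have hHb : 0 < H b := by
    have he : 1 ≤ Real.exp (2 * b * a) := by
      rw [show (1:ℝ) = Real.exp 0 by simp]
      exact Real.exp_le_exp.mpr (by nlinarith)
    have h5 : 0 ≤ 2 * b + α := by linarith
    have : (2 * b + α) * 1 ≤ (2 * b + α) * Real.exp (2 * b * a) :=
      mul_le_mul_of_nonneg_left he h5
    simp only [hH]
    nlinarith
  obtain ⟨κ, hκIcc, hκ⟩ := intermediate_value_Icc hbc hcont.continuousOn
    (⟨le_of_lt hHc, le_of_lt hHb⟩ : (0:ℝ) ∈ Set.Icc (H c) (H b))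
  have hκc : c < κ := by
    rcases lt_or_eq_of_le hκIcc.1 with h | h
    · exact h
    · exfalso; rw [← h] at hκ; linarith
  refine ⟨κ, ⟨lt_trans hc hκc, (stmt14_key a α κ).mpr hκ⟩, ?_⟩
  rintro y ⟨hy, hyeq⟩
  have hyH : H y = 0 := (stmt14_key a α y).mp hyeq
  have hyc : c < y := by
    by_contra h
    push_neg at h
    have := hanti (Set.left_mem_Icc.mpr (le_of_lt hc)) ⟨le_of_lt hy, h⟩ hy
    rw [hH0] at this; linarith
  exact hmono.injOn (Set.mem_Ici.mpr (le_of_lt hyc)) (Set.mem_Ici.mpr (le_of_lt hκc))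
    (by rw [hyH, hκ])

private lemma stmt14_factor (a α κ : ℝ) :
    (2 * κ + α) ^ 2 = α ^ 2 * Real.exp (-4 * κ * a) ↔
      (2 * κ + α = α * Real.exp (-2 * κ * a) ∨ 2 * κ + α = -α * Real.exp (-2 * κ * a)) := by
  have e : Real.exp (-4 * κ * a) = Real.exp (-2 * κ * a) * Real.exp (-2 * κ * a) := by
    rw [← Real.exp_add]; congr 1; ring
  rw [e]
  constructor
  · intro h
    have h2 : (2 * κ + α - α * Real.exp (-2 * κ * a)) *
        (2 * κ + α + α * Real.exp (-2 * κ * a)) = 0 := by linear_combination h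
    rcases mul_eq_zero.mp h2 with h3 | h3
    · left; linarith
    · right; linarith
  · rintro (h | h) <;> rw [h] <;> ring

/-- let `a>0`.
(i) if `α≥0` there is no `κ>0` with `(2κ+α)² = α²e^{−4κa}`;
(ii) if `α<0` there is exactly one `κ>0` with `2κ+α = −α·e^{−2κa}`;
(iii) if `α<0`, a positive solution of `2κ+α = α·e^{−2κa}` exists iff `aα<−1`, and then it
is unique.  Consequently, for `α<0` the equation `(2κ+α)² = α²e^{−4κa}` has exactly one
positive solution when `−1 ≤ aα < 0` and exactly two when `aα < −1`. -/
theorem stmt14 (a : ℝ) (ha : 0 < a) (α : ℝ) :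
    (0 ≤ α → ¬∃ κ : ℝ, 0 < κ ∧ (2 * κ + α) ^ 2 = α ^ 2 * Real.exp (-4 * κ * a)) ∧
    (α < 0 → ∃! κ : ℝ, 0 < κ ∧ 2 * κ + α = -α * Real.exp (-2 * κ * a)) ∧
    (α < 0 → ((∃ κ : ℝ, 0 < κ ∧ 2 * κ + α = α * Real.exp (-2 * κ * a)) ↔ a * α < -1)) ∧
    (α < 0 → a * α < -1 → ∃! κ : ℝ, 0 < κ ∧ 2 * κ + α = α * Real.exp (-2 * κ * a)) ∧
    (α < 0 → -1 ≤ a * α →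
      {κ : ℝ | 0 < κ ∧ (2 * κ + α) ^ 2 = α ^ 2 * Real.exp (-4 * κ * a)}.ncard = 1) ∧
    (α < 0 → a * α < -1 →
      {κ : ℝ | 0 < κ ∧ (2 * κ + α) ^ 2 = α ^ 2 * Real.exp (-4 * κ * a)}.ncard = 2) := by
  refine ⟨?_, ?_, ?_, ?_, ?_, ?_⟩
  · rintro hα ⟨κ, hκ, heq⟩
    have h1 : Real.exp (-4 * κ * a) ≤ 1 := by
      rw [show (1:ℝ) = Real.exp 0 by simp]
      exact Real.exp_le_exp.mpr (by nlinarith)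
    have h2 : α ^ 2 * Real.exp (-4 * κ * a) ≤ α ^ 2 * 1 :=
      mul_le_mul_of_nonneg_left h1 (sq_nonneg α)
    nlinarith [mul_pos hκ hκ, mul_nonneg (le_of_lt hκ) hα]
  · exact fun hα => stmt14_aux_ii a ha α hα
  · intro hα
    constructor
    · intro hex
      by_contra h
      push_neg at h
      exact stmt14_noroot a ha α hα h hex
    · intro h
      exact (stmt14_root a ha α hα h).exists
  · exact fun hα h => stmt14_root a ha α hα h
  · intro hα hle
    obtain ⟨κ₁, hκ₁, huniq⟩ := stmt14_aux_ii a ha α hα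
    have hset : {κ : ℝ | 0 < κ ∧ (2 * κ + α) ^ 2 = α ^ 2 * Real.exp (-4 * κ * a)} = {κ₁} := by
      ext x
      simp only [Set.mem_setOf_eq, Set.mem_singleton_iff]
      constructor
      · rintro ⟨hx, hsq⟩
        rcases (stmt14_factor a α x).mp hsq with h | h
        · exact absurd ⟨x, hx, h⟩ (stmt14_noroot a ha α hα hle)
        · exact huniq x ⟨hx, h⟩
      · rintro rfl
        exact ⟨hκ₁.1, (stmt14_factor a α _).mpr (Or.inr hκ₁.2)⟩
    rw [hset]
    exact Set.ncard_singleton κ₁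
  · intro hα hlt
    obtain ⟨κ₁, hκ₁, huniq₁⟩ := stmt14_aux_ii a ha α hα
    obtain ⟨κ₂, hκ₂, huniq₂⟩ := stmt14_root a ha α hα hlt
    have hne : κ₁ ≠ κ₂ := by
      intro h
      rw [h] at hκ₁
      have := hκ₁.2
      rw [hκ₂.2] at this
      nlinarith [Real.exp_pos (-2 * κ₂ * a)]
    have hset : {κ : ℝ | 0 < κ ∧ (2 * κ + α) ^ 2 = α ^ 2 * Real.exp (-4 * κ * a)}
        = {κ₁, κ₂} := by
      ext x
      simp only [Set.mem_setOf_eq, Set.mem_insert_iff, Set.mem_singleton_iff]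
      constructor
      · rintro ⟨hx, hsq⟩
        rcases (stmt14_factor a α x).mp hsq with h | h
        · exact Or.inr (huniq₂ x ⟨hx, h⟩)
        · exact Or.inl (huniq₁ x ⟨hx, h⟩)
      · rintro (rfl | rfl)
        · exact ⟨hκ₁.1, (stmt14_factor a α _).mpr (Or.inr hκ₁.2)⟩
        · exact ⟨hκ₂.1, (stmt14_factor a α _).mpr (Or.inl hκ₂.2)⟩
    rw [hset]
    exact Set.ncard_pair hne
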